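/- Let r > 1, λ = √(r² − 1)/r, c₁² + c₂² = 1, and let a, b be nonzero real constants. Define E, F, G : ℝ² → ℝ by E(s,φ) = P(s), F(s,φ) = r·a·P(s), G(s,φ) = r²a²·P(s) + Q(s), where D(s) = c₁/r + cosh(λs + c₃), P(s) = λ²·sinh²(λs + c₃)/D(s)², Q(s) = λ²·(a²(r² − 1) + b²c₂²)/D(s)² (this is the first fundamental form of the circular Dini surface for r > 1). Then at every point (s,φ) with sinh(λs + c₃) ≠ 0, one has EG − F² ≠ 0 and the Gaussian curvature given by the Brioschi formula applied to (E, F, G) equals the constant K₀ = c₂²(a² − b²)/(a²(r² − 1) + b²c₂²). -/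

import Mathlib

/-- Partial derivative with respect to the first coordinate `s`. -/
noncomputable def pds (f : ℝ → ℝ → ℝ) : ℝ → ℝ → ℝ :=
  fun s φ => deriv (fun t => f t φ) s

/-- Partial derivative with respect to the second coordinate `φ`. -/
noncomputable def pdphi (f : ℝ → ℝ → ℝ) : ℝ → ℝ → ℝ :=
  fun s φ => deriv (fun ψ => f s ψ) φ

/-- The Brioschi formula for the Gaussian curvature of the metric
`E ds² + 2F ds dφ + G dφ²`. -/
noncomputable def brioschi (E F G : ℝ → ℝ → ℝ) (s φ : ℝ) : ℝ :=
  (Matrix.det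
     !![-(1/2) * pdphi (pdphi E) s φ + pdphi (pds F) s φ - (1/2) * pds (pds G) s φ,
          (1/2) * pds E s φ, pds F s φ - (1/2) * pdphi E s φ;
        pdphi F s φ - (1/2) * pds G s φ, E s φ, F s φ;
        (1/2) * pdphi G s φ, F s φ, G s φ]
   - Matrix.det
     !![0, (1/2) * pdphi E s φ, (1/2) * pds G s φ;
        (1/2) * pdphi E s φ, E s φ, F s φ;
        (1/2) * pds G s φ, F s φ, G s φ])
  / (E s φ * G s φ - (F s φ) ^ 2) ^ 2

noncomputable def DD (lam c₃ c₁ r t : ℝ) : ℝ := c₁ / r + Real.cosh (lam * t + c₃)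

noncomputable def PP (lam c₃ c₁ r t : ℝ) : ℝ :=
  lam ^ 2 * Real.sinh (lam * t + c₃) ^ 2 / DD lam c₃ c₁ r t ^ 2

noncomputable def PP1 (lam c₃ c₁ r t : ℝ) : ℝ :=
  2 * lam ^ 3 * Real.sinh (lam * t + c₃) *
    (Real.cosh (lam * t + c₃) * DD lam c₃ c₁ r t - Real.sinh (lam * t + c₃) ^ 2) /
    DD lam c₃ c₁ r t ^ 3

noncomputable def PP2 (lam c₃ c₁ r t : ℝ) : ℝ :=
  2 * lam ^ 4 *
    ((Real.cosh (lam * t + c₃) ^ 2 + Real.sinh (lam * t + c₃) ^ 2) * DD lam c₃ c₁ r t ^ 2 -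
      5 * Real.sinh (lam * t + c₃) ^ 2 * Real.cosh (lam * t + c₃) * DD lam c₃ c₁ r t +
      3 * Real.sinh (lam * t + c₃) ^ 4) /
    DD lam c₃ c₁ r t ^ 4

noncomputable def QQ (lam c₃ c₁ r C t : ℝ) : ℝ := lam ^ 2 * C / DD lam c₃ c₁ r t ^ 2

noncomputable def QQ1 (lam c₃ c₁ r C t : ℝ) : ℝ :=
  -(2 * lam ^ 3 * C * Real.sinh (lam * t + c₃)) / DD lam c₃ c₁ r t ^ 3

noncomputable def QQ2 (lam c₃ c₁ r C t : ℝ) : ℝ :=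
  -(2 * lam ^ 4 * C *
      (Real.cosh (lam * t + c₃) * DD lam c₃ c₁ r t - 3 * Real.sinh (lam * t + c₃) ^ 2)) /
    DD lam c₃ c₁ r t ^ 4

lemma hasDerivAt_aff (lam c₃ t : ℝ) : HasDerivAt (fun u : ℝ => lam * u + c₃) lam t := by
  simpa using ((hasDerivAt_id t).const_mul lam).add_const c₃

lemma hasDerivAt_sh (lam c₃ t : ℝ) :
    HasDerivAt (fun u : ℝ => Real.sinh (lam * u + c₃)) (lam * Real.cosh (lam * t + c₃)) t := by
  simpa [mul_comm, Function.comp_def] using (Real.hasDerivAt_sinh (lam * t + c₃)).comp t (hasDerivAt_aff lam c₃ t)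

lemma hasDerivAt_ch (lam c₃ t : ℝ) :
    HasDerivAt (fun u : ℝ => Real.cosh (lam * u + c₃)) (lam * Real.sinh (lam * t + c₃)) t := by
  simpa [mul_comm, Function.comp_def] using (Real.hasDerivAt_cosh (lam * t + c₃)).comp t (hasDerivAt_aff lam c₃ t)

lemma hasDerivAt_DD (lam c₃ c₁ r t : ℝ) :
    HasDerivAt (DD lam c₃ c₁ r) (lam * Real.sinh (lam * t + c₃)) t := by
  unfold DD
  exact (hasDerivAt_ch lam c₃ t).const_add (c₁ / r)

lemma hasDerivAt_PP (lam c₃ c₁ r t : ℝ) (hd : DD lam c₃ c₁ r t ≠ 0) :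
    HasDerivAt (PP lam c₃ c₁ r) (PP1 lam c₃ c₁ r t) t := by
  have h := (((hasDerivAt_sh lam c₃ t).pow 2).const_mul (lam ^ 2)).div
    ((hasDerivAt_DD lam c₃ c₁ r t).pow 2) (pow_ne_zero 2 hd)
  refine HasDerivAt.congr_deriv h ?_
  unfold PP1 DD at *
  simp only [Pi.pow_apply]
  field_simp
  ring

lemma hasDerivAt_PP1 (lam c₃ c₁ r t : ℝ) (hd : DD lam c₃ c₁ r t ≠ 0) :
    HasDerivAt (PP1 lam c₃ c₁ r) (PP2 lam c₃ c₁ r t) t := by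
  have hnum : HasDerivAt
      (fun u => 2 * lam ^ 3 * Real.sinh (lam * u + c₃) *
        (Real.cosh (lam * u + c₃) * DD lam c₃ c₁ r u - Real.sinh (lam * u + c₃) ^ 2))
      ((2 * lam ^ 3 * (lam * Real.cosh (lam * t + c₃))) *
        (Real.cosh (lam * t + c₃) * DD lam c₃ c₁ r t - Real.sinh (lam * t + c₃) ^ 2) +
       (2 * lam ^ 3 * Real.sinh (lam * t + c₃)) *
        ((lam * Real.sinh (lam * t + c₃)) * DD lam c₃ c₁ r t +
          Real.cosh (lam * t + c₃) * (lam * Real.sinh (lam * t + c₃)) -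
          (2 : ℕ) * Real.sinh (lam * t + c₃) ^ (2 - 1) * (lam * Real.cosh (lam * t + c₃)))) t := by
    exact (((hasDerivAt_sh lam c₃ t).const_mul (2 * lam ^ 3)).mul
      (((hasDerivAt_ch lam c₃ t).mul (hasDerivAt_DD lam c₃ c₁ r t)).sub
        ((hasDerivAt_sh lam c₃ t).pow 2)))
  have h := hnum.div ((hasDerivAt_DD lam c₃ c₁ r t).pow 3) (pow_ne_zero 3 hd)
  refine HasDerivAt.congr_deriv h ?_
  unfold PP2 DD at *
  have hc2 : Real.cosh (lam * t + c₃) ^ 2 = Real.sinh (lam * t + c₃) ^ 2 + 1 :=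
    Real.cosh_sq _
  simp only [Pi.pow_apply]
  field_simp
  ring

lemma hasDerivAt_QQ (lam c₃ c₁ r C t : ℝ) (hd : DD lam c₃ c₁ r t ≠ 0) :
    HasDerivAt (QQ lam c₃ c₁ r C) (QQ1 lam c₃ c₁ r C t) t := by
  have h := (hasDerivAt_const t (lam ^ 2 * C)).div
    ((hasDerivAt_DD lam c₃ c₁ r t).pow 2) (pow_ne_zero 2 hd)
  refine HasDerivAt.congr_deriv h ?_
  unfold QQ1 DD at *
  simp only [Pi.pow_apply]
  field_simp
  ring

lemma hasDerivAt_QQ1 (lam c₃ c₁ r C t : ℝ) (hd : DD lam c₃ c₁ r t ≠ 0) :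
    HasDerivAt (QQ1 lam c₃ c₁ r C) (QQ2 lam c₃ c₁ r C t) t := by
  have hnum : HasDerivAt
      (fun u => -(2 * lam ^ 3 * C * Real.sinh (lam * u + c₃)))
      (-(2 * lam ^ 3 * C * (lam * Real.cosh (lam * t + c₃)))) t :=
    ((hasDerivAt_sh lam c₃ t).const_mul (2 * lam ^ 3 * C)).neg
  have h := hnum.div ((hasDerivAt_DD lam c₃ c₁ r t).pow 3) (pow_ne_zero 3 hd)
  refine HasDerivAt.congr_deriv h ?_
  unfold QQ2 DD at *
  simp only [Pi.pow_apply]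
  field_simp
  ring

set_option maxHeartbeats 4000000 in
theorem stmt16 (r c₁ c₂ c₃ lam a b : ℝ) (hr : 1 < r)
    (hc : c₁ ^ 2 + c₂ ^ 2 = 1)
    (hlam : lam = Real.sqrt (r ^ 2 - 1) / r)
    (ha : a ≠ 0) (hb : b ≠ 0)
    (D P Q : ℝ → ℝ)
    (hD : ∀ s, D s = c₁ / r + Real.cosh (lam * s + c₃))
    (hP : ∀ s, P s = lam ^ 2 * Real.sinh (lam * s + c₃) ^ 2 / (D s) ^ 2)
    (hQ : ∀ s, Q s = lam ^ 2 * (a ^ 2 * (r ^ 2 - 1) + b ^ 2 * c₂ ^ 2) / (D s) ^ 2)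
    (E F G : ℝ → ℝ → ℝ)
    (hE : ∀ s φ : ℝ, E s φ = P s)
    (hF : ∀ s φ : ℝ, F s φ = r * a * P s)
    (hG : ∀ s φ : ℝ, G s φ = r ^ 2 * a ^ 2 * P s + Q s) :
    ∀ s φ : ℝ, Real.sinh (lam * s + c₃) ≠ 0 →
      E s φ * G s φ - (F s φ) ^ 2 ≠ 0 ∧
      brioschi E F G s φ =
        c₂ ^ 2 * (a ^ 2 - b ^ 2) / (a ^ 2 * (r ^ 2 - 1) + b ^ 2 * c₂ ^ 2) := by
  intro s φ hs
  have hr0 : (0 : ℝ) < r := lt_trans zero_lt_one hr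
  have hrne : r ≠ 0 := ne_of_gt hr0
  have hr2 : (0 : ℝ) < r ^ 2 - 1 := by nlinarith
  have hlam0 : lam ≠ 0 := by
    rw [hlam]
    exact ne_of_gt (div_pos (Real.sqrt_pos.mpr hr2) hr0)
  have ha2 : (0 : ℝ) < a ^ 2 := by positivity
  have hCpos : (0 : ℝ) < a ^ 2 * (r ^ 2 - 1) + b ^ 2 * c₂ ^ 2 := by
    nlinarith [mul_pos ha2 hr2, sq_nonneg (b * c₂)]
  have hCne : a ^ 2 * (r ^ 2 - 1) + b ^ 2 * c₂ ^ 2 ≠ 0 := ne_of_gt hCpos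
  have hDpos : ∀ t : ℝ, 0 < DD lam c₃ c₁ r t := by
    intro t
    have h1 := Real.one_le_cosh (lam * t + c₃)
    have h3 : -1 ≤ c₁ := by nlinarith [sq_nonneg c₂, sq_nonneg (c₁ + 1)]
    have h5 : 0 < c₁ + r * Real.cosh (lam * t + c₃) := by nlinarith
    have h6 : DD lam c₃ c₁ r t = (c₁ + r * Real.cosh (lam * t + c₃)) / r := by
      unfold DD; field_simp
    rw [h6]
    exact div_pos h5 hr0
  have hDne : ∀ t : ℝ, DD lam c₃ c₁ r t ≠ 0 := fun t => ne_of_gt (hDpos t)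
  have hPfun : P = PP lam c₃ c₁ r := by
    funext t
    rw [hP t, hD t]; rfl
  have hQfun : Q = QQ lam c₃ c₁ r (a ^ 2 * (r ^ 2 - 1) + b ^ 2 * c₂ ^ 2) := by
    funext t
    rw [hQ t, hD t]; rfl
  have hDsne : D s ≠ 0 := by rw [hD s]; exact hDne s
  have hPs : P s ≠ 0 := by
    rw [hP s]
    exact div_ne_zero (mul_ne_zero (pow_ne_zero 2 hlam0) (pow_ne_zero 2 hs))
      (pow_ne_zero 2 hDsne)
  have hQs : Q s ≠ 0 := by
    rw [hQ s]
    exact div_ne_zero (mul_ne_zero (pow_ne_zero 2 hlam0) hCne) (pow_ne_zero 2 hDsne)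
  have hZval : E s φ * G s φ - F s φ ^ 2 = P s * Q s := by
    rw [hE, hF, hG]; ring
  have hZne : E s φ * G s φ - F s φ ^ 2 ≠ 0 := by
    rw [hZval]; exact mul_ne_zero hPs hQs
  refine ⟨hZne, ?_⟩
  -- partial derivative computations
  have hpdphiE : ∀ t ψ : ℝ, pdphi E t ψ = 0 := by
    intro t ψ
    simp only [pdphi]
    rw [show (fun y => E t y) = fun _ => P t from funext fun y => hE t y]
    exact deriv_const _ _
  have hpdphiF : ∀ t ψ : ℝ, pdphi F t ψ = 0 := by
    intro t ψ
    simp only [pdphi]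
    rw [show (fun y => F t y) = fun _ => r * a * P t from funext fun y => hF t y]
    exact deriv_const _ _
  have hpdphiG : ∀ t ψ : ℝ, pdphi G t ψ = 0 := by
    intro t ψ
    simp only [pdphi]
    rw [show (fun y => G t y) = fun _ => r ^ 2 * a ^ 2 * P t + Q t from funext fun y => hG t y]
    exact deriv_const _ _
  have hpdsE : ∀ t ψ : ℝ, pds E t ψ = PP1 lam c₃ c₁ r t := by
    intro t ψ
    simp only [pds]
    rw [show (fun u => E u ψ) = PP lam c₃ c₁ r from funext fun u => by rw [hE u ψ, hPfun]]
    exact (hasDerivAt_PP lam c₃ c₁ r t (hDne t)).deriv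
  have hpdsF : ∀ t ψ : ℝ, pds F t ψ = r * a * PP1 lam c₃ c₁ r t := by
    intro t ψ
    simp only [pds]
    rw [show (fun u => F u ψ) = fun u => r * a * PP lam c₃ c₁ r u from
      funext fun u => by rw [hF u ψ, hPfun]]
    exact ((hasDerivAt_PP lam c₃ c₁ r t (hDne t)).const_mul (r * a)).deriv
  have hpdsG : ∀ t ψ : ℝ, pds G t ψ =
      r ^ 2 * a ^ 2 * PP1 lam c₃ c₁ r t +
        QQ1 lam c₃ c₁ r (a ^ 2 * (r ^ 2 - 1) + b ^ 2 * c₂ ^ 2) t := by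
    intro t ψ
    simp only [pds]
    rw [show (fun u => G u ψ) = fun u => r ^ 2 * a ^ 2 * PP lam c₃ c₁ r u +
        QQ lam c₃ c₁ r (a ^ 2 * (r ^ 2 - 1) + b ^ 2 * c₂ ^ 2) u from
      funext fun u => by rw [hG u ψ, hPfun, hQfun]]
    exact (((hasDerivAt_PP lam c₃ c₁ r t (hDne t)).const_mul (r ^ 2 * a ^ 2)).add
      (hasDerivAt_QQ lam c₃ c₁ r _ t (hDne t))).deriv
  have h1 : pdphi (pdphi E) s φ = 0 := by
    show deriv (fun y => pdphi E s y) φ = 0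
    rw [show (fun y => pdphi E s y) = fun _ => (0 : ℝ) from funext fun y => hpdphiE s y]
    exact deriv_const _ _
  have h2 : pdphi (pds F) s φ = 0 := by
    show deriv (fun y => pds F s y) φ = 0
    rw [show (fun y => pds F s y) = fun _ => r * a * PP1 lam c₃ c₁ r s from
      funext fun y => hpdsF s y]
    exact deriv_const _ _
  have h3 : pds (pds G) s φ =
      r ^ 2 * a ^ 2 * PP2 lam c₃ c₁ r s +
        QQ2 lam c₃ c₁ r (a ^ 2 * (r ^ 2 - 1) + b ^ 2 * c₂ ^ 2) s := by
    show deriv (fun u => pds G u φ) s = _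
    rw [show (fun u => pds G u φ) = fun u => r ^ 2 * a ^ 2 * PP1 lam c₃ c₁ r u +
        QQ1 lam c₃ c₁ r (a ^ 2 * (r ^ 2 - 1) + b ^ 2 * c₂ ^ 2) u from
      funext fun u => hpdsG u φ]
    exact (((hasDerivAt_PP1 lam c₃ c₁ r s (hDne s)).const_mul (r ^ 2 * a ^ 2)).add
      (hasDerivAt_QQ1 lam c₃ c₁ r _ s (hDne s))).deriv
  have hch2 : Real.cosh (lam * s + c₃) ^ 2 = Real.sinh (lam * s + c₃) ^ 2 + 1 :=
    Real.cosh_sq _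
  have hdvr : r * (c₁ / r + Real.cosh (lam * s + c₃)) = c₁ + r * Real.cosh (lam * s + c₃) := by
    field_simp
  simp only [brioschi]
  rw [div_eq_div_iff (pow_ne_zero 2 hZne) hCne]
  simp only [Matrix.det_fin_three, Matrix.of_apply, Matrix.cons_val', Matrix.cons_val_zero, Matrix.cons_val_one,
    Matrix.head_cons, Matrix.empty_val', Matrix.cons_val_fin_one, Matrix.head_fin_const,
    Matrix.cons_val_two, Matrix.tail_cons]
  rw [h1, h2, h3, hpdsE s φ, hpdsF s φ, hpdsG s φ, hpdphiE s φ, hpdphiF s φ, hpdphiG s φ,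
    hE s φ, hF s φ, hG s φ, hPfun, hQfun]
  simp only [PP, PP1, PP2, QQ, QQ1, QQ2, DD]
  generalize hq : c₁ / r + Real.cosh (lam * s + c₃) = dv
  rw [hq] at hdvr
  linear_combination
    (a ^ 2 * r ^ 2 * lam ^ 8 * (a ^ 2 * (r ^ 2 - 1) + b ^ 2 * c₂ ^ 2) ^ 2 *
      Real.sinh (lam * s + c₃) ^ 4 / dv ^ 8) * hch2 -
    (a ^ 2 * lam ^ 8 * (a ^ 2 * (r ^ 2 - 1) + b ^ 2 * c₂ ^ 2) ^ 2 *
      Real.sinh (lam * s + c₃) ^ 4 *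
      (r * dv - r * Real.cosh (lam * s + c₃) + c₁) / dv ^ 8) * hdvr -
    (a ^ 2 * lam ^ 8 * (a ^ 2 * (r ^ 2 - 1) + b ^ 2 * c₂ ^ 2) ^ 2 *
      Real.sinh (lam * s + c₃) ^ 4 / dv ^ 8) * hc
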